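/- arXiv:2209.02620 — 3 statements merged into one kernel-verified Lean document; each statement's English description precedes it below -/
import Mathlib

section
/- For every ε₁ with 0 < ε₁ < 1/16 and every ε₂ with 0 < ε₂ < 1/2, there exists a unique map G : M → M satisfying G(Φ(ρ,θ)) = Φ(ρ + ε₁P(ρ), θ + ε₂ sin 2θ) for all ρ ∈ [1,5] and θ ∈ ℝ, and this map G is a bijection of M onto itself. -/
open Real Set

noncomputable def χ (ρ : ℝ) : ℝ := (7 * ρ - 5) / (ρ + 1)
noncomputable def η (ρ : ℝ) : ℝ := (ρ + 5) / (7 - ρ)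
noncomputable def P (ρ : ℝ) : ℝ := (ρ - 1) * (ρ - 3) ^ 2 * (ρ - 5)

/-- The closed annulus `M = {(x,y) : 1 ≤ x² + y² ≤ 25}`. -/
def Mset : Set (ℝ × ℝ) := {p | 1 ≤ p.1 ^ 2 + p.2 ^ 2 ∧ p.1 ^ 2 + p.2 ^ 2 ≤ 25}

/-- The parametrization `Φ(ρ,θ) = (χ(ρ) cos θ, η(ρ) sin θ)`. -/
noncomputable def Φ (ρ θ : ℝ) : ℝ × ℝ := (χ ρ * Real.cos θ, η ρ * Real.sin θ)

/-- `G : M → M` satisfies `G (Φ ρ θ) = Φ (ρ + ε₁ P(ρ)) (θ + ε₂ sin 2θ)`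
for all `ρ ∈ [1,5]` and all `θ ∈ ℝ`. -/
def IsG (ε₁ ε₂ : ℝ) (G : Mset → Mset) : Prop :=
  ∀ ρ θ : ℝ, ρ ∈ Icc (1:ℝ) 5 →
    ∀ (hm : Φ ρ θ ∈ Mset)
      (hm' : Φ (ρ + ε₁ * P ρ) (θ + ε₂ * Real.sin (2 * θ)) ∈ Mset),
      G ⟨Φ ρ θ, hm⟩ = ⟨Φ (ρ + ε₁ * P ρ) (θ + ε₂ * Real.sin (2 * θ)), hm'⟩

/-! ### Auxiliary lemmas -/

lemma chi_bdd {ρ : ℝ} (h : ρ ∈ Icc (1:ℝ) 5) : 1 ≤ χ ρ ∧ χ ρ ≤ 5 := by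
  obtain ⟨h1, h5⟩ := h
  have hd : (0:ℝ) < ρ + 1 := by linarith
  exact ⟨by rw [χ, le_div_iff₀ hd]; linarith, by rw [χ, div_le_iff₀ hd]; linarith⟩

lemma eta_bdd {ρ : ℝ} (h : ρ ∈ Icc (1:ℝ) 5) : 1 ≤ η ρ ∧ η ρ ≤ 5 := by
  obtain ⟨h1, h5⟩ := h
  have hd : (0:ℝ) < 7 - ρ := by linarith
  exact ⟨by rw [η, le_div_iff₀ hd]; linarith, by rw [η, div_le_iff₀ hd]; linarith⟩

lemma chi_lt {a b : ℝ} (ha : a ∈ Icc (1:ℝ) 5) (hb : b ∈ Icc (1:ℝ) 5) (h : a < b) :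
    χ a < χ b := by
  have ha' : (0:ℝ) < a + 1 := by linarith [ha.1]
  have hb' : (0:ℝ) < b + 1 := by linarith [hb.1]
  rw [χ, χ, div_lt_div_iff₀ ha' hb']; nlinarith

lemma eta_lt {a b : ℝ} (ha : a ∈ Icc (1:ℝ) 5) (hb : b ∈ Icc (1:ℝ) 5) (h : a < b) :
    η a < η b := by
  have ha' : (0:ℝ) < 7 - a := by linarith [ha.2]
  have hb' : (0:ℝ) < 7 - b := by linarith [hb.2]
  rw [η, η, div_lt_div_iff₀ ha' hb']; nlinarith

lemma phi_mem {ρ : ℝ} (θ : ℝ) (h : ρ ∈ Icc (1:ℝ) 5) : Φ ρ θ ∈ Mset := by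
  obtain ⟨hc1, hc5⟩ := chi_bdd h
  obtain ⟨he1, he5⟩ := eta_bdd h
  have hs := Real.sin_sq_add_cos_sq θ
  constructor <;> simp only [Φ] <;>
    nlinarith [mul_nonneg (by nlinarith : (0:ℝ) ≤ χ ρ^2 - 1) (sq_nonneg (Real.cos θ)),
      mul_nonneg (by nlinarith : (0:ℝ) ≤ η ρ^2 - 1) (sq_nonneg (Real.sin θ)),
      mul_nonneg (by nlinarith : (0:ℝ) ≤ 25 - χ ρ^2) (sq_nonneg (Real.cos θ)),
      mul_nonneg (by nlinarith : (0:ℝ) ≤ 25 - η ρ^2) (sq_nonneg (Real.sin θ))]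

lemma keylem (A A' B B' c s c' s' : ℝ) (hA : 1 ≤ A) (hB : 1 ≤ B) (hAA : A < A') (hBB : B < B')
    (e1 : A * c = A' * c') (e2 : B * s = B' * s')
    (p1 : c ^ 2 + s ^ 2 = 1) (p2 : c' ^ 2 + s' ^ 2 = 1) : False := by
  have h1 : A ^ 2 * c ^ 2 = A' ^ 2 * c' ^ 2 := by linear_combination (A*c + A'*c') * e1
  have h2 : B ^ 2 * s ^ 2 = B' ^ 2 * s' ^ 2 := by linear_combination (B*s + B'*s') * e2
  have key : (A'^2 - A^2) * (B'^2 * c^2) + (B'^2 - B^2) * (A'^2 * s^2) = 0 := by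
    linear_combination (A'^2*B'^2)*p1 - B'^2*h1 - A'^2*h2 - (A'^2*B'^2)*p2
  have hA2 : (0:ℝ) < A'^2 - A^2 := by nlinarith
  have hB2 : (0:ℝ) < B'^2 - B^2 := by nlinarith
  have hA'2 : (0:ℝ) < A'^2 := by nlinarith
  have hB'2 : (0:ℝ) < B'^2 := by nlinarith
  have t1 : 0 ≤ (A'^2 - A^2) * (B'^2 * c^2) :=
    mul_nonneg hA2.le (mul_nonneg hB'2.le (sq_nonneg c))
  have t2 : 0 ≤ (B'^2 - B^2) * (A'^2 * s^2) :=
    mul_nonneg hB2.le (mul_nonneg hA'2.le (sq_nonneg s))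
  have hc : c^2 = 0 := by
    have h0 : (A'^2 - A^2) * (B'^2 * c^2) = 0 := by linarith
    have := (mul_eq_zero.mp h0).resolve_left hA2.ne'
    exact (mul_eq_zero.mp this).resolve_left hB'2.ne'
  have hs : s^2 = 0 := by
    have h0 : (B'^2 - B^2) * (A'^2 * s^2) = 0 := by linarith
    have := (mul_eq_zero.mp h0).resolve_left hB2.ne'
    exact (mul_eq_zero.mp this).resolve_left hA'2.ne'
  rw [hc, hs] at p1; norm_num at p1

lemma phi_inj {a b θ θ' : ℝ} (ha : a ∈ Icc (1:ℝ) 5) (hb : b ∈ Icc (1:ℝ) 5)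
    (h : Φ a θ = Φ b θ') :
    a = b ∧ Real.cos θ = Real.cos θ' ∧ Real.sin θ = Real.sin θ' := by
  have h1 : χ a * Real.cos θ = χ b * Real.cos θ' := congrArg Prod.fst h
  have h2 : η a * Real.sin θ = η b * Real.sin θ' := congrArg Prod.snd h
  have p1 : Real.cos θ ^ 2 + Real.sin θ ^ 2 = 1 := Real.cos_sq_add_sin_sq θ
  have p2 : Real.cos θ' ^ 2 + Real.sin θ' ^ 2 = 1 := Real.cos_sq_add_sin_sq θ'
  have hab : a = b := by
    rcases lt_trichotomy a b with hlt | heq | hgt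
    · exact absurd (keylem (χ a) (χ b) (η a) (η b) _ _ _ _ (chi_bdd ha).1 (eta_bdd ha).1
        (chi_lt ha hb hlt) (eta_lt ha hb hlt) h1 h2 p1 p2) not_false
    · exact heq
    · exact absurd (keylem (χ b) (χ a) (η b) (η a) _ _ _ _ (chi_bdd hb).1 (eta_bdd hb).1
        (chi_lt hb ha hgt) (eta_lt hb ha hgt) h1.symm h2.symm p2 p1) not_false
  subst hab
  have hc : (0:ℝ) < χ a := by linarith [(chi_bdd ha).1]
  have he : (0:ℝ) < η a := by linarith [(eta_bdd ha).1]
  exact ⟨rfl, mul_left_cancel₀ hc.ne' h1, mul_left_cancel₀ he.ne' h2⟩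

lemma exists_cos_sin {a b : ℝ} (h : a ^ 2 + b ^ 2 = 1) :
    ∃ θ : ℝ, Real.cos θ = a ∧ Real.sin θ = b := by
  set z : ℂ := ⟨a, b⟩ with hz
  have habs : ‖z‖ = 1 := by
    rw [Complex.norm_def, Complex.normSq_mk]; rw [show a*a+b*b = 1 by nlinarith]
    exact Real.sqrt_one
  have hz0 : z ≠ 0 := by
    intro h0; rw [h0] at habs; simp at habs
  refine ⟨Complex.arg z, ?_, ?_⟩
  · rw [Complex.cos_arg hz0, habs]; simp [hz]
  · rw [Complex.sin_arg, habs]; simp [hz]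

lemma phi_surj {p : ℝ × ℝ} (hp : p ∈ Mset) :
    ∃ ρ θ : ℝ, ρ ∈ Icc (1:ℝ) 5 ∧ Φ ρ θ = p := by
  obtain ⟨hp1, hp2⟩ := hp
  set f : ℝ → ℝ := fun ρ => p.1 ^ 2 / (χ ρ) ^ 2 + p.2 ^ 2 / (η ρ) ^ 2 with hf
  have hcont : ContinuousOn f (Icc 1 5) := by
    apply ContinuousOn.add
    · apply ContinuousOn.div continuousOn_const
      · apply ContinuousOn.pow
        apply ContinuousOn.div (by fun_prop) (by fun_prop)
        intro x hx; intro h0; nlinarith [hx.1]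
      · intro x hx; have := (chi_bdd hx).1; positivity
    · apply ContinuousOn.div continuousOn_const
      · apply ContinuousOn.pow
        apply ContinuousOn.div (by fun_prop) (by fun_prop)
        intro x hx; intro h0; nlinarith [hx.2]
      · intro x hx; have := (eta_bdd hx).1; positivity
  have hχ1 : χ 1 = 1 := by norm_num [χ]
  have hη1 : η 1 = 1 := by norm_num [η]
  have hχ5 : χ 5 = 5 := by norm_num [χ]
  have hη5 : η 5 = 5 := by norm_num [η]
  have hf1 : f 1 = p.1 ^ 2 + p.2 ^ 2 := by simp only [hf]; rw [hχ1, hη1]; ring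
  have hf5 : f 5 = (p.1 ^ 2 + p.2 ^ 2) / 25 := by simp only [hf]; rw [hχ5, hη5]; ring
  have hmem : (1:ℝ) ∈ Icc (f 5) (f 1) := by
    constructor
    · rw [hf5]; linarith
    · rw [hf1]; linarith
  obtain ⟨ρ, hρ, hfρ⟩ := intermediate_value_Icc' (by norm_num : (1:ℝ) ≤ 5) hcont hmem
  have hχ : (0:ℝ) < χ ρ := by linarith [(chi_bdd hρ).1]
  have hη : (0:ℝ) < η ρ := by linarith [(eta_bdd hρ).1]
  have hab : (p.1 / χ ρ) ^ 2 + (p.2 / η ρ) ^ 2 = 1 := by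
    rw [div_pow, div_pow]; exact hfρ
  obtain ⟨θ, hc, hs⟩ := exists_cos_sin hab
  refine ⟨ρ, θ, hρ, ?_⟩
  show (χ ρ * Real.cos θ, η ρ * Real.sin θ) = p
  rw [hc, hs, mul_div_cancel₀ _ hχ.ne', mul_div_cancel₀ _ hη.ne']

noncomputable def gmap (ε₁ ρ : ℝ) : ℝ := ρ + ε₁ * P ρ
noncomputable def hmap (ε₂ θ : ℝ) : ℝ := θ + ε₂ * Real.sin (2 * θ)

lemma F_ge {a b : ℝ} (ha : a ∈ Icc (1:ℝ) 5) (hb : b ∈ Icc (1:ℝ) 5) :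
    -16 ≤ (a-3)^3+(a-3)^2*(b-3)+(a-3)*(b-3)^2+(b-3)^3 - 4*(a-3) - 4*(b-3) := by
  obtain ⟨ha1, ha5⟩ := ha; obtain ⟨hb1, hb5⟩ := hb
  nlinarith [sq_nonneg (a+b-6), sq_nonneg (a-b), mul_nonneg (sub_nonneg.2 ha1) (sub_nonneg.2 hb1),
    mul_nonneg (sub_nonneg.2 ha5) (sub_nonneg.2 hb5),
    mul_nonneg (mul_nonneg (sub_nonneg.2 ha1) (sub_nonneg.2 hb1)) (sq_nonneg (a+b-6)),
    mul_nonneg (sub_nonneg.2 ha1) (sq_nonneg (a+b-6)),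
    mul_nonneg (sub_nonneg.2 hb1) (sq_nonneg (a+b-6)),
    mul_nonneg (sub_nonneg.2 ha1) (sq_nonneg (a-b)),
    mul_nonneg (sub_nonneg.2 hb1) (sq_nonneg (a-b))]

lemma g_strictMonoOn {ε₁ : ℝ} (hε₁ : 0 < ε₁) (hε₁' : ε₁ < 1/16) :
    StrictMonoOn (gmap ε₁) (Icc (1:ℝ) 5) := by
  intro a ha b hb hab
  have hF := F_ge ha hb
  set F := (a-3)^3+(a-3)^2*(b-3)+(a-3)*(b-3)^2+(b-3)^3 - 4*(a-3) - 4*(b-3) with hFdef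
  have key : gmap ε₁ b - gmap ε₁ a = (b - a) * (1 + ε₁ * F) := by
    simp only [gmap, P, hFdef]; ring
  have hpos : 0 < 1 + ε₁ * F := by nlinarith
  nlinarith [mul_pos (sub_pos.2 hab) hpos]

lemma g_one (ε₁ : ℝ) : gmap ε₁ 1 = 1 := by simp [gmap, P]
lemma g_five (ε₁ : ℝ) : gmap ε₁ 5 = 5 := by simp [gmap, P]

lemma g_mapsTo {ε₁ : ℝ} (hε₁ : 0 < ε₁) (hε₁' : ε₁ < 1/16) :
    MapsTo (gmap ε₁) (Icc (1:ℝ) 5) (Icc (1:ℝ) 5) := by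
  intro x hx
  have hm := (g_strictMonoOn hε₁ hε₁').monotoneOn
  constructor
  · have := hm (left_mem_Icc.2 (by norm_num)) hx hx.1
    rwa [g_one] at this
  · have := hm hx (right_mem_Icc.2 (by norm_num)) hx.2
    rwa [g_five] at this

lemma g_cont (ε₁ : ℝ) : Continuous (gmap ε₁) := by
  unfold gmap P; fun_prop

lemma g_surjOn {ε₁ : ℝ} (hε₁ : 0 < ε₁) (hε₁' : ε₁ < 1/16) :
    SurjOn (gmap ε₁) (Icc (1:ℝ) 5) (Icc (1:ℝ) 5) := by
  have := intermediate_value_Icc (by norm_num : (1:ℝ) ≤ 5) (g_cont ε₁).continuousOn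
  rw [g_one, g_five] at this
  exact this

lemma h_strictMono {ε₂ : ℝ} (hε₂ : 0 < ε₂) (hε₂' : ε₂ < 1/2) :
    StrictMono (hmap ε₂) := by
  intro a b hab
  have hl : |Real.sin (2*b) - Real.sin (2*a)| ≤ 2*b - 2*a := by
    rw [Real.sin_sub_sin]
    calc |2 * Real.sin ((2*b - 2*a)/2) * Real.cos ((2*b + 2*a)/2)|
        = 2 * |Real.sin ((2*b - 2*a)/2)| * |Real.cos ((2*b + 2*a)/2)| := by
          rw [abs_mul, abs_mul]; norm_num
      _ ≤ 2 * |(2*b - 2*a)/2| * 1 := by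
          have h1 : |Real.sin ((2*b - 2*a)/2)| ≤ |(2*b - 2*a)/2| := Real.abs_sin_le_abs
          have h2 : |Real.cos ((2*b + 2*a)/2)| ≤ 1 := Real.abs_cos_le_one _
          nlinarith [abs_nonneg (Real.sin ((2*b - 2*a)/2)), abs_nonneg (Real.cos ((2*b + 2*a)/2)),
            abs_nonneg ((2*b - 2*a)/2)]
      _ = 2*b - 2*a := by rw [abs_of_nonneg (by linarith)]; ring
  have h1 := abs_le.1 hl
  simp only [hmap]
  nlinarith [h1.1, h1.2]

lemma h_cont (ε₂ : ℝ) : Continuous (hmap ε₂) := by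
  unfold hmap; fun_prop

lemma h_surj {ε₂ : ℝ} (hε₂ : 0 < ε₂) (hε₂' : ε₂ < 1/2) :
    Function.Surjective (hmap ε₂) := by
  intro y
  have h1 : hmap ε₂ (y - ε₂) ≤ y := by
    simp only [hmap]; nlinarith [Real.sin_le_one (2*(y-ε₂))]
  have h2 : y ≤ hmap ε₂ (y + ε₂) := by
    simp only [hmap]; nlinarith [Real.neg_one_le_sin (2*(y+ε₂))]
  have := intermediate_value_Icc (by linarith : y - ε₂ ≤ y + ε₂) (h_cont ε₂).continuousOn
  obtain ⟨x, _, hx⟩ := this ⟨h1, h2⟩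
  exact ⟨x, hx⟩

lemma h_per (ε₂ θ : ℝ) (k : ℤ) : hmap ε₂ (θ + k * (2*π)) = hmap ε₂ θ + k * (2*π) := by
  simp only [hmap]
  have : Real.sin (2 * (θ + k * (2*π))) = Real.sin (2*θ) := by
    rw [show 2 * (θ + k * (2*π)) = 2*θ + (2*k : ℤ) * (2*π) by push_cast; ring]
    exact Real.sin_add_int_mul_two_pi _ _
  rw [this]; ring

lemma cos_sin_eq_iff {θ θ' : ℝ} (hc : Real.cos θ = Real.cos θ') (hs : Real.sin θ = Real.sin θ') :
    ∃ k : ℤ, θ' = θ + k * (2*π) := by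
  have hexp : Complex.exp (θ * Complex.I) = Complex.exp (θ' * Complex.I) := by
    rw [Complex.exp_mul_I, Complex.exp_mul_I]
    rw [← Complex.ofReal_cos, ← Complex.ofReal_cos, ← Complex.ofReal_sin, ← Complex.ofReal_sin,
      hc, hs]
  rw [Complex.exp_eq_exp_iff_exists_int] at hexp
  obtain ⟨n, hn⟩ := hexp
  refine ⟨-n, ?_⟩
  have := congrArg Complex.im hn
  simp [Complex.add_im, Complex.mul_im] at this
  push_cast
  linarith

lemma phi_theta_per (r t : ℝ) (k : ℤ) : Φ r (t + k * (2*π)) = Φ r t := by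
  simp only [Φ]
  rw [Real.cos_add_int_mul_two_pi, Real.sin_add_int_mul_two_pi]

theorem stmt6 (ε₁ ε₂ : ℝ) (hε₁ : 0 < ε₁) (hε₁' : ε₁ < 1 / 16)
    (hε₂ : 0 < ε₂) (hε₂' : ε₂ < 1 / 2) :
    (∃! G : Mset → Mset, IsG ε₁ ε₂ G) ∧
    (∀ G : Mset → Mset, IsG ε₁ ε₂ G → Function.Bijective G) := by
  have hbij : Function.Bijective (hmap ε₂) :=
    ⟨(h_strictMono hε₂ hε₂').injective, h_surj hε₂ hε₂'⟩
  -- the congruence lemma for the forward map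
  have cong : ∀ ρ θ ρ' θ' : ℝ, ρ ∈ Icc (1:ℝ) 5 → ρ' ∈ Icc (1:ℝ) 5 → Φ ρ θ = Φ ρ' θ' →
      Φ (gmap ε₁ ρ) (hmap ε₂ θ) = Φ (gmap ε₁ ρ') (hmap ε₂ θ') := by
    intro ρ θ ρ' θ' hρ hρ' heq
    obtain ⟨rfl, hc, hs⟩ := phi_inj hρ hρ' heq
    obtain ⟨k, rfl⟩ := cos_sin_eq_iff hc hs
    rw [h_per, phi_theta_per]
  -- choose a parametrization of each point of M
  choose R Θ hRΘ using fun p : Mset => phi_surj p.2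
  have hR : ∀ p, R p ∈ Icc (1:ℝ) 5 := fun p => (hRΘ p).1
  have hΦ : ∀ p : Mset, Φ (R p) (Θ p) = (p : ℝ × ℝ) := fun p => (hRΘ p).2
  set G₀ : Mset → Mset :=
    fun p => ⟨Φ (gmap ε₁ (R p)) (hmap ε₂ (Θ p)), phi_mem _ (g_mapsTo hε₁ hε₁' (hR p))⟩
    with hG₀def
  have hG₀IsG : IsG ε₁ ε₂ G₀ := by
    intro ρ θ hρ hm hm'
    apply Subtype.ext
    show Φ (gmap ε₁ (R ⟨Φ ρ θ, hm⟩)) (hmap ε₂ (Θ ⟨Φ ρ θ, hm⟩))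
        = Φ (ρ + ε₁ * P ρ) (θ + ε₂ * Real.sin (2 * θ))
    exact cong _ _ _ _ (hR _) hρ (hΦ ⟨Φ ρ θ, hm⟩)
  have huniq : ∀ G : Mset → Mset, IsG ε₁ ε₂ G → G = G₀ := by
    intro G hG
    funext p
    have hmem : Φ (R p) (Θ p) ∈ Mset := phi_mem _ (hR p)
    have hmem' : Φ (R p + ε₁ * P (R p)) (Θ p + ε₂ * Real.sin (2 * Θ p)) ∈ Mset :=
      phi_mem _ (g_mapsTo hε₁ hε₁' (hR p))
    have hp : p = ⟨Φ (R p) (Θ p), hmem⟩ := Subtype.ext (hΦ p).symm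
    calc G p = G ⟨Φ (R p) (Θ p), hmem⟩ := by rw [← hp]
      _ = ⟨Φ (R p + ε₁ * P (R p)) (Θ p + ε₂ * Real.sin (2 * Θ p)), hmem'⟩ :=
          hG (R p) (Θ p) (hR p) hmem hmem'
      _ = G₀ ⟨Φ (R p) (Θ p), hmem⟩ := (hG₀IsG (R p) (Θ p) (hR p) hmem hmem').symm
      _ = G₀ p := by rw [← hp]
  refine ⟨⟨G₀, hG₀IsG, huniq⟩, ?_⟩
  intro G hG
  rw [huniq G hG]
  -- construct the inverse map
  have hg_exists : ∀ x : ℝ, ∃ y : ℝ, x ∈ Icc (1:ℝ) 5 → y ∈ Icc (1:ℝ) 5 ∧ gmap ε₁ y = x := by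
    intro x
    by_cases hx : x ∈ Icc (1:ℝ) 5
    · obtain ⟨y, hy, hyx⟩ := g_surjOn hε₁ hε₁' hx
      exact ⟨y, fun _ => ⟨hy, hyx⟩⟩
    · exact ⟨0, fun h => absurd h hx⟩
  choose ginv hginv using hg_exists
  set hinv : ℝ → ℝ := Function.invFun (hmap ε₂) with hinvdef
  have hinv_right : ∀ x, hmap ε₂ (hinv x) = x := Function.rightInverse_invFun hbij.2
  have hinv_left : ∀ x, hinv (hmap ε₂ x) = x := Function.leftInverse_invFun hbij.1
  have hinv_per : ∀ θ : ℝ, ∀ k : ℤ, hinv (θ + k * (2*π)) = hinv θ + k * (2*π) := by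
    intro θ k
    apply hbij.1
    rw [hinv_right, h_per, hinv_right]
  have ginv_mem : ∀ x, x ∈ Icc (1:ℝ) 5 → ginv x ∈ Icc (1:ℝ) 5 := fun x hx => (hginv x hx).1
  have ginv_right : ∀ x, x ∈ Icc (1:ℝ) 5 → gmap ε₁ (ginv x) = x := fun x hx => (hginv x hx).2
  have ginv_left : ∀ x, x ∈ Icc (1:ℝ) 5 → ginv (gmap ε₁ x) = x := by
    intro x hx
    have hgx : gmap ε₁ x ∈ Icc (1:ℝ) 5 := g_mapsTo hε₁ hε₁' hx
    exact (g_strictMonoOn hε₁ hε₁').injOn (ginv_mem _ hgx) hx (ginv_right _ hgx)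
  -- the congruence lemma for the inverse map
  have cong' : ∀ ρ θ ρ' θ' : ℝ, ρ ∈ Icc (1:ℝ) 5 → ρ' ∈ Icc (1:ℝ) 5 → Φ ρ θ = Φ ρ' θ' →
      Φ (ginv ρ) (hinv θ) = Φ (ginv ρ') (hinv θ') := by
    intro ρ θ ρ' θ' hρ hρ' heq
    obtain ⟨rfl, hc, hs⟩ := phi_inj hρ hρ' heq
    obtain ⟨k, rfl⟩ := cos_sin_eq_iff hc hs
    rw [hinv_per, phi_theta_per]
  set G₁ : Mset → Mset :=
    fun p => ⟨Φ (ginv (R p)) (hinv (Θ p)), phi_mem _ (ginv_mem _ (hR p))⟩ with hG₁def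
  apply Function.bijective_iff_has_inverse.2
  refine ⟨G₁, ?_, ?_⟩
  · -- left inverse : G₁ (G₀ p) = p
    intro p
    apply Subtype.ext
    show Φ (ginv (R (G₀ p))) (hinv (Θ (G₀ p))) = (p : ℝ × ℝ)
    have h1 : Φ (R (G₀ p)) (Θ (G₀ p)) = Φ (gmap ε₁ (R p)) (hmap ε₂ (Θ p)) := hΦ (G₀ p)
    have h2 := cong' _ _ _ _ (hR (G₀ p)) (g_mapsTo hε₁ hε₁' (hR p)) h1
    rw [h2, ginv_left _ (hR p), hinv_left, hΦ p]
  · -- right inverse : G₀ (G₁ p) = p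
    intro p
    apply Subtype.ext
    show Φ (gmap ε₁ (R (G₁ p))) (hmap ε₂ (Θ (G₁ p))) = (p : ℝ × ℝ)
    have h1 : Φ (R (G₁ p)) (Θ (G₁ p)) = Φ (ginv (R p)) (hinv (Θ p)) := hΦ (G₁ p)
    have h2 := cong _ _ _ _ (hR (G₁ p)) (ginv_mem _ (hR p)) h1
    rw [h2, ginv_right _ (hR p), hinvdef]
    rw [hinv_right, hΦ p]
end

section
/- Let 0 < ε₁ < 1/16 and 0 < ε₂ < 1/2. For all ρ ∈ [1,5] and θ ∈ ℝ, if the point Φ(ρ,θ) = (χ(ρ)cos θ, η(ρ)sin θ) lies on the ellipse γ = {(x,y) : x²/4 + y²/16 = 1}, then the point Φ(ρ + ε₁P(ρ), θ + ε₂ sin 2θ) = (x',y') lies strictly inside γ, i.e., x'²/4 + y'²/16 < 1. -/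
open Real Set

lemma chi_one_le {ρ : ℝ} (h1 : 1 ≤ ρ) : 1 ≤ χ ρ := by
  rw [χ, le_div_iff₀ (by linarith)]; linarith

lemma eta_one_le {ρ : ℝ} (h1 : 1 ≤ ρ) (h5 : ρ ≤ 5) : 1 ≤ η ρ := by
  rw [η, le_div_iff₀ (by linarith)]; linarith

lemma chi_le_chi {a b : ℝ} (ha : 1 ≤ a) (hab : a ≤ b) : χ a ≤ χ b := by
  rw [χ, χ, div_le_div_iff₀ (by linarith) (by linarith)]; nlinarith

lemma chi_lt_chi {a b : ℝ} (ha : 1 ≤ a) (hab : a < b) : χ a < χ b := by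
  rw [χ, χ, div_lt_div_iff₀ (by linarith) (by linarith)]; nlinarith

lemma eta_le_eta {a b : ℝ} (ha : 1 ≤ a) (hab : a ≤ b) (hb : b ≤ 5) : η a ≤ η b := by
  rw [η, η, div_le_div_iff₀ (by linarith) (by linarith)]; nlinarith

lemma eta_lt_eta {a b : ℝ} (ha : 1 ≤ a) (hab : a < b) (hb : b ≤ 5) : η a < η b := by
  rw [η, η, div_lt_div_iff₀ (by linarith) (by linarith)]; nlinarith

lemma eta_lt_two_chi {ρ : ℝ} (h1 : 1 ≤ ρ) (h5 : ρ ≤ 5) : η ρ < 2 * χ ρ := by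
  have h2 : 2 * χ ρ = (14 * ρ - 10) / (ρ + 1) := by rw [χ]; ring
  rw [η, h2, div_lt_div_iff₀ (by linarith) (by linarith)]
  nlinarith [mul_nonneg (by linarith : (0:ℝ) ≤ ρ - 1) (by linarith : (0:ℝ) ≤ 5 - ρ)]

lemma rho'_bounds {ε₁ ρ : ℝ} (hε₁ : 0 < ε₁) (hε₁' : ε₁ < 1 / 16)
    (h1 : 1 ≤ ρ) (h5 : ρ ≤ 5) : 1 ≤ ρ + ε₁ * P ρ ∧ ρ + ε₁ * P ρ ≤ ρ := by
  constructor
  · have hQlb : -16 ≤ (ρ - 3) ^ 2 * (ρ - 5) := by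
      nlinarith [mul_nonneg (by linarith : (0:ℝ) ≤ ρ - 1)
        (by positivity : (0:ℝ) ≤ (ρ - 5) ^ 2 + 4)]
    have h2 : 0 ≤ 1 + ε₁ * ((ρ - 3) ^ 2 * (ρ - 5)) := by
      nlinarith [mul_le_mul_of_nonneg_left hQlb hε₁.le]
    have h3 := mul_nonneg (by linarith : (0:ℝ) ≤ ρ - 1) h2
    rw [P]; nlinarith [h3]
  · have hP : P ρ ≤ 0 := by
      rw [P]
      nlinarith [mul_nonneg (mul_nonneg (by linarith : (0:ℝ) ≤ ρ - 1)
        (sq_nonneg (ρ - 3))) (by linarith : (0:ℝ) ≤ 5 - ρ)]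
    nlinarith [mul_nonpos_of_nonneg_of_nonpos hε₁.le hP]

lemma sin_prod_pos {ε₂ : ℝ} (hε₂ : 0 < ε₂) (hε₂' : ε₂ < 1 / 2) :
    ∀ u : ℝ, 0 < Real.sin u →
      0 < Real.sin (u + ε₂ * Real.sin u) * Real.sin (ε₂ * Real.sin u) := by
  intro u hu
  set t := ε₂ * Real.sin u with ht_def
  have ht0 : 0 < t := mul_pos hε₂ hu
  have ht1 : t < 1 / 2 := by
    have := Real.sin_le_one u
    nlinarith
  have hπ := Real.pi_gt_three
  have hsint : 0 < Real.sin t := Real.sin_pos_of_pos_of_lt_pi ht0 (by linarith)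
  have hcost : (1:ℝ) / 2 < Real.cos t := by
    have h13 : t < π / 3 := by linarith
    have := Real.cos_lt_cos_of_nonneg_of_le_pi ht0.le (by linarith : π / 3 ≤ π) h13
    rwa [Real.cos_pi_div_three] at this
  have hsle : Real.sin t ≤ t := Real.sin_le ht0.le
  have hsum : 0 < Real.sin (u + t) := by
    rw [Real.sin_add]
    have hcu : -1 ≤ Real.cos u := Real.neg_one_le_cos u
    have hbd : Real.cos u * Real.sin t ≥ -Real.sin t := by nlinarith
    nlinarith [mul_pos hu (by linarith : (0:ℝ) < Real.cos t - ε₂)]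
  exact mul_pos hsum hsint

lemma sin_prod_nonneg {ε₂ : ℝ} (hε₂ : 0 < ε₂) (hε₂' : ε₂ < 1 / 2) (u : ℝ) :
    0 ≤ Real.sin (u + ε₂ * Real.sin u) * Real.sin (ε₂ * Real.sin u) ∧
      (Real.sin u ≠ 0 → 0 < Real.sin (u + ε₂ * Real.sin u) * Real.sin (ε₂ * Real.sin u)) := by
  rcases lt_trichotomy (Real.sin u) 0 with h | h | h
  · have h2 := sin_prod_pos hε₂ hε₂' (-u) (by rw [Real.sin_neg]; linarith)
    rw [Real.sin_neg] at h2
    rw [show -u + ε₂ * -Real.sin u = -(u + ε₂ * Real.sin u) by ring,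
      show ε₂ * -Real.sin u = -(ε₂ * Real.sin u) by ring,
      Real.sin_neg, Real.sin_neg, neg_mul_neg] at h2
    exact ⟨h2.le, fun _ => h2⟩
  · rw [h]
    simp
  · have h2 := sin_prod_pos hε₂ hε₂' u h
    exact ⟨h2.le, fun _ => h2⟩

lemma cos_sq_le {ε₂ : ℝ} (hε₂ : 0 < ε₂) (hε₂' : ε₂ < 1 / 2) (θ : ℝ) :
    Real.cos (θ + ε₂ * Real.sin (2 * θ)) ^ 2 ≤ Real.cos θ ^ 2 ∧
      (Real.sin (2 * θ) ≠ 0 →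
        Real.cos (θ + ε₂ * Real.sin (2 * θ)) ^ 2 < Real.cos θ ^ 2) := by
  obtain ⟨k1, k2⟩ := sin_prod_nonneg hε₂ hε₂' (2 * θ)
  have e1 : (2 * (θ + ε₂ * Real.sin (2 * θ)) + 2 * θ) / 2
      = 2 * θ + ε₂ * Real.sin (2 * θ) := by ring
  have e2 : (2 * (θ + ε₂ * Real.sin (2 * θ)) - 2 * θ) / 2 = ε₂ * Real.sin (2 * θ) := by ring
  have hdiff : Real.cos (2 * (θ + ε₂ * Real.sin (2 * θ))) - Real.cos (2 * θ)
      = -2 * (Real.sin (2 * θ + ε₂ * Real.sin (2 * θ)) * Real.sin (ε₂ * Real.sin (2 * θ))) := by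
    rw [Real.cos_sub_cos, e1, e2]; ring
  have hc1 := Real.cos_sq (θ + ε₂ * Real.sin (2 * θ))
  have hc2 := Real.cos_sq θ
  constructor
  · linarith
  · intro hne
    have := k2 hne
    linarith

lemma key_strict {A B A' B' c s c' s' : ℝ} (hA1 : 1 ≤ A') (hB1 : 1 ≤ B')
    (hA : A' ≤ A) (hB : B' ≤ B) (hcoef : B < 2 * A)
    (hcs : s ^ 2 + c ^ 2 = 1) (hcs' : s' ^ 2 + c' ^ 2 = 1)
    (hcc : c' ^ 2 < c ^ 2)
    (h : A ^ 2 * c ^ 2 / 4 + B ^ 2 * s ^ 2 / 16 = 1) :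
    A' ^ 2 * c' ^ 2 / 4 + B' ^ 2 * s' ^ 2 / 16 < 1 := by
  have hA2 : A' ^ 2 ≤ A ^ 2 := by nlinarith
  have hB2 : B' ^ 2 ≤ B ^ 2 := by nlinarith
  have hcoef2 : B ^ 2 < 4 * A ^ 2 := by nlinarith
  have step1 : A' ^ 2 * c' ^ 2 / 4 + B' ^ 2 * s' ^ 2 / 16
      ≤ A ^ 2 * c' ^ 2 / 4 + B ^ 2 * s' ^ 2 / 16 := by
    nlinarith [mul_nonneg (sub_nonneg.2 hA2) (sq_nonneg c'),
      mul_nonneg (sub_nonneg.2 hB2) (sq_nonneg s')]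
  have step2 : A ^ 2 * c' ^ 2 / 4 + B ^ 2 * s' ^ 2 / 16 < 1 := by
    nlinarith [mul_pos (by linarith : (0:ℝ) < 4 * A ^ 2 - B ^ 2)
      (by linarith : (0:ℝ) < c ^ 2 - c' ^ 2)]
  linarith

set_option maxHeartbeats 1000000 in
theorem stmt7 (ε₁ ε₂ : ℝ) (hε₁ : 0 < ε₁) (hε₁' : ε₁ < 1 / 16)
    (hε₂ : 0 < ε₂) (hε₂' : ε₂ < 1 / 2) :
    ∀ ρ ∈ Icc (1:ℝ) 5, ∀ θ : ℝ,
      (Φ ρ θ).1 ^ 2 / 4 + (Φ ρ θ).2 ^ 2 / 16 = 1 →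
      (Φ (ρ + ε₁ * P ρ) (θ + ε₂ * Real.sin (2 * θ))).1 ^ 2 / 4 +
        (Φ (ρ + ε₁ * P ρ) (θ + ε₂ * Real.sin (2 * θ))).2 ^ 2 / 16 < 1 := by
  intro ρ hρ θ h
  obtain ⟨h1, h5⟩ := hρ
  obtain ⟨hr1, hr2⟩ := rho'_bounds hε₁ hε₁' h1 h5
  set ρ' := ρ + ε₁ * P ρ with hρ'def
  set θ' := θ + ε₂ * Real.sin (2 * θ) with hθ'def
  simp only [Φ] at h ⊢
  have hA1 : 1 ≤ χ ρ' := chi_one_le hr1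
  have hB1 : 1 ≤ η ρ' := eta_one_le hr1 (by linarith)
  have hA : χ ρ' ≤ χ ρ := chi_le_chi hr1 hr2
  have hB : η ρ' ≤ η ρ := eta_le_eta hr1 hr2 h5
  have hAρ : 1 ≤ χ ρ := chi_one_le h1
  have hBρ : 1 ≤ η ρ := eta_one_le h1 h5
  have hcoef : η ρ < 2 * χ ρ := eta_lt_two_chi h1 h5
  have hcs : Real.sin θ ^ 2 + Real.cos θ ^ 2 = 1 := Real.sin_sq_add_cos_sq θ
  have hcs' : Real.sin θ' ^ 2 + Real.cos θ' ^ 2 = 1 := Real.sin_sq_add_cos_sq θ'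
  have hh : χ ρ ^ 2 * Real.cos θ ^ 2 / 4 + η ρ ^ 2 * Real.sin θ ^ 2 / 16 = 1 := by
    rw [← h]; ring
  clear h
  by_cases hs : Real.sin (2 * θ) = 0
  · -- θ' = θ, and sin θ * cos θ = 0
    have hθeq : θ' = θ := by rw [hθ'def, hs]; ring
    rw [hθeq]
    rw [Real.sin_two_mul] at hs
    rcases mul_eq_zero.1 hs with h' | hcz
    · -- sin θ = 0
      have hsz : Real.sin θ = 0 := by
        rcases mul_eq_zero.1 h' with h'' | h''
        · norm_num at h''
        · exact h''
      have hc2 : Real.cos θ ^ 2 = 1 := by rw [hsz] at hcs; linarith [hcs]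
      have hA4 : χ ρ ^ 2 = 4 := by rw [hsz, hc2] at hh; linarith [hh]
      have hρeq : ρ = 7 / 5 := by
        rw [χ, div_pow] at hA4
        have hne : (ρ + 1) ^ 2 ≠ 0 := by positivity
        have h4 : (7 * ρ - 5) ^ 2 = 4 * (ρ + 1) ^ 2 := by
          field_simp at hA4; linarith [hA4]
        have hfac : (ρ - 7 / 5) * (ρ - 1 / 3) = 0 := by linear_combination h4 / 45
        rcases mul_eq_zero.1 hfac with h5' | h5'
        · linarith
        · linarith
      have hPval : P ρ = -2304 / 625 := by rw [hρeq, P]; norm_num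
      have hlt : ρ' < ρ := by rw [hρ'def, hPval]; nlinarith
      have hAlt : χ ρ' < 2 := by
        have h2 := chi_lt_chi hr1 hlt
        have : χ ρ = 2 := by nlinarith [hAρ]
        linarith [h2, this.symm.le, this ▸ h2]
      have hexp : (χ ρ' * Real.cos θ) ^ 2 = χ ρ' ^ 2 := by
        rw [mul_pow, hc2, mul_one]
      rw [hsz]
      rw [show (η ρ' * 0) ^ 2 = 0 by ring]
      nlinarith [hexp, hAlt, hA1]
    · -- cos θ = 0
      have hs2 : Real.sin θ ^ 2 = 1 := by rw [hcz] at hcs; linarith [hcs]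
      have hB16 : η ρ ^ 2 = 16 := by rw [hcz, hs2] at hh; linarith [hh]
      have hρeq : ρ = 23 / 5 := by
        rw [η, div_pow] at hB16
        have hne : (7 - ρ) ^ 2 ≠ 0 := by
          have : (7:ℝ) - ρ ≠ 0 := by linarith
          positivity
        have h4 : (ρ + 5) ^ 2 = 16 * (7 - ρ) ^ 2 := by
          rw [div_eq_iff hne] at hB16; linarith [hB16]
        have hfac : (ρ - 23 / 5) * (ρ - 11) = 0 := by linear_combination -h4 / 15
        rcases mul_eq_zero.1 hfac with h5' | h5'
        · linarith
        · linarith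
      have hPval : P ρ = -2304 / 625 := by rw [hρeq, P]; norm_num
      have hlt : ρ' < ρ := by rw [hρ'def, hPval]; nlinarith
      have hBlt : η ρ' < 4 := by
        have h2 := eta_lt_eta hr1 hlt h5
        have : η ρ = 4 := by nlinarith [hBρ]
        linarith [this ▸ h2]
      have hexp : (η ρ' * Real.sin θ) ^ 2 = η ρ' ^ 2 := by
        rw [mul_pow, hs2, mul_one]
      rw [hcz]
      rw [show (χ ρ' * 0) ^ 2 = 0 by ring]
      nlinarith [hexp, hBlt, hB1]
  · obtain ⟨hcle, hclt⟩ := cos_sq_le hε₂ hε₂' θ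
    rw [← hθ'def] at hclt
    have hstrict := hclt hs
    have key := key_strict hA1 hB1 hA hB hcoef hcs hcs' hstrict hh
    calc (χ ρ' * Real.cos θ') ^ 2 / 4 + (η ρ' * Real.sin θ') ^ 2 / 16
        = χ ρ' ^ 2 * Real.cos θ' ^ 2 / 4 + η ρ' ^ 2 * Real.sin θ' ^ 2 / 16 := by ring
      _ < 1 := key
end

section
/- Fix n ≥ 2, p⁰ ∈ ℝⁿ, ε ≠ 0, and k = 3, and let φ : ℝⁿ → ℝⁿ × ℝⁿ be φ(q) = (p⁰ + εf(q₁), q) with f(t) = (sin³ t, cos t, 0, …, 0). Let a, b ∈ ℝ with ab ≠ 0. Then for every q ∈ ℝⁿ, the vector ((b cos q₁)e₁, a e₁) ∈ ℝⁿ × ℝⁿ (where e₁ is the first standard basis vector of ℝⁿ) does not lie in the range of the derivative Dφ(q); that is, the Hamiltonian vector field V = a∂_{q₁} + b(cos q₁)∂_{p₁} with Hamilton function ap₁ − b sin q₁ is nowhere tangent to the torus L₀ = φ(ℝⁿ). -/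
open Real

/-- `f(t) = (sin^k t, cos t, 0, …, 0) ∈ ℝⁿ` (here `n = m + 2 ≥ 2`). -/
noncomputable def f (m k : ℕ) (t : ℝ) : Fin (m + 2) → ℝ :=
  fun i => if i = 0 then Real.sin t ^ k else if i = 1 then Real.cos t else 0

/-- The derivative `f'(t) = (k sin^(k-1) t cos t, −sin t, 0, …, 0)`. -/
noncomputable def f' (m k : ℕ) (t : ℝ) : Fin (m + 2) → ℝ :=
  fun i => if i = 0 then (k : ℝ) * Real.sin t ^ (k - 1) * Real.cos t
    else if i = 1 then -Real.sin t else 0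

/-- The parametrization `φ(q) = (p⁰ + ε f(q₁), q)` of the torus `L₀`. -/
noncomputable def φ (m k : ℕ) (p0 : Fin (m + 2) → ℝ) (ε : ℝ)
    (q : Fin (m + 2) → ℝ) : (Fin (m + 2) → ℝ) × (Fin (m + 2) → ℝ) :=
  (fun i => p0 i + ε * f m k (q 0) i, q)

/-- The derivative of `φ` at `q`:  `Dφ(q) u = (ε f'(q₁) u₁, u)`. -/
noncomputable def Dφ (m k : ℕ) (ε : ℝ) (q u : Fin (m + 2) → ℝ) :
    (Fin (m + 2) → ℝ) × (Fin (m + 2) → ℝ) :=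
  (fun i => ε * f' m k (q 0) i * u 0, u)

theorem stmt13 (m : ℕ) (p0 : Fin (m + 2) → ℝ) (ε : ℝ) (hε : ε ≠ 0)
    (a b : ℝ) (hab : a * b ≠ 0) (q : Fin (m + 2) → ℝ) :
    ((fun i => if i = 0 then b * Real.cos (q 0) else 0),
      (fun i => if i = 0 then a else (0 : ℝ)))
      ∉ Set.range (Dφ m 3 ε q) := by
  rintro ⟨u, hu⟩
  have ha : a ≠ 0 := fun h => hab (by simp [h])
  have hb : b ≠ 0 := fun h => hab (by simp [h])
  have h2 := congrArg Prod.snd hu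
  have h1 := congrArg Prod.fst hu
  simp only [Dφ] at h1 h2
  have hu0 : u 0 = a := by rw [h2]; simp
  have e1 : ε * f' m 3 (q 0) 1 * u 0 = 0 := by
    have := congrFun h1 1
    simpa using this
  have e0 : ε * f' m 3 (q 0) 0 * u 0 = b * Real.cos (q 0) := by
    have := congrFun h1 0
    simpa using this
  rw [hu0] at e1 e0
  simp only [f'] at e1 e0
  norm_num at e1 e0
  have hsin : Real.sin (q 0) = 0 := by tauto
  rw [hsin] at e0
  have hcos : Real.cos (q 0) ≠ 0 := by
    intro h
    have := Real.sin_sq_add_cos_sq (q 0)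
    rw [hsin, h] at this; norm_num at this
  simp at e0
  tauto
end
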